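/- Let u, β ∈ L²(0,1), let l₁, l₂ : T → ℝ be bounded measurable with ‖l₁‖_∞ ≤ L₁ and ‖l₂‖_∞ ≤ L₂, and define v(x) = β(x) + ∫_0^x l₁(x,ξ)u(ξ)dξ + ∫_0^x l₂(x,ξ)β(ξ)dξ. Then ‖u‖² + ‖v‖² ≤ (4 + 3L₁² + 3L₂²)(‖u‖² + ‖β‖²). -/

import Mathlib

open MeasureTheory Real Set

/-- Cauchy–Schwarz: the square of the integral of `|f|` over `Ioc 0 1` is bounded by the
integral of `f^2`. -/
lemma cs_aux (f : ℝ → ℝ) (hf : MemLp f 2 (volume.restrict (Ioc (0:ℝ) 1))) :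
    (∫ x in Ioc (0:ℝ) 1, |f x|) ^ 2 ≤ ∫ x in Ioc (0:ℝ) 1, f x ^ 2 := by
  have hpq : Real.HolderConjugate 2 2 := Real.holderConjugate_iff.mpr ⟨one_lt_two, by norm_num⟩
  have h1 : MemLp (fun x => |f x|) (ENNReal.ofReal 2) (volume.restrict (Ioc (0:ℝ) 1)) := by
    have h2 : (ENNReal.ofReal 2) = (2 : ENNReal) := by norm_num
    rw [h2]; exact hf.abs
  have h2 : MemLp (fun _ : ℝ => (1:ℝ)) (ENNReal.ofReal 2) (volume.restrict (Ioc (0:ℝ) 1)) :=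
    memLp_const 1
  have key := integral_mul_le_Lp_mul_Lq_of_nonneg hpq
    (ae_of_all _ fun x => abs_nonneg (f x)) (ae_of_all _ fun _ => zero_le_one) h1 h2
  simp only [mul_one, one_rpow] at key
  have hone : ∫ (_ : ℝ) in Ioc (0:ℝ) 1, (1:ℝ) = 1 := by simp
  have habs : ∫ x in Ioc (0:ℝ) 1, |f x| ^ (2:ℝ) = ∫ x in Ioc (0:ℝ) 1, f x ^ 2 := by
    refine integral_congr_ae (ae_of_all _ fun x => ?_)
    show |f x| ^ (2:ℝ) = f x ^ 2
    rw [show ((2:ℝ)) = ((2:ℕ) : ℝ) by norm_num, Real.rpow_natCast, sq_abs]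
  rw [hone, habs, Real.one_rpow, mul_one] at key
  have hInonneg : 0 ≤ ∫ x in Ioc (0:ℝ) 1, f x ^ 2 :=
    setIntegral_nonneg measurableSet_Ioc fun x _ => sq_nonneg _
  calc (∫ x in Ioc (0:ℝ) 1, |f x|) ^ 2
      ≤ ((∫ x in Ioc (0:ℝ) 1, f x ^ 2) ^ ((1:ℝ)/2)) ^ 2 := by
        apply pow_le_pow_left₀ _ key
        exact setIntegral_nonneg measurableSet_Ioc fun x _ => abs_nonneg _
    _ = ∫ x in Ioc (0:ℝ) 1, f x ^ 2 := by
        rw [← Real.rpow_natCast ((∫ x in Ioc (0:ℝ) 1, f x ^ 2) ^ ((1:ℝ)/2)) 2,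
          ← Real.rpow_mul hInonneg]
        norm_num

theorem backstepping_norm_equiv_inverse
    (u β : ℝ → ℝ) (l₁ l₂ : ℝ → ℝ → ℝ) (L₁ L₂ : ℝ)
    (hu : MemLp u 2 (volume.restrict (Ioc (0:ℝ) 1)))
    (hβ : MemLp β 2 (volume.restrict (Ioc (0:ℝ) 1)))
    (hl₁m : Measurable (fun p : ℝ × ℝ => l₁ p.1 p.2))
    (hl₂m : Measurable (fun p : ℝ × ℝ => l₂ p.1 p.2))
    (hl₁ : ∀ x ξ : ℝ, 0 ≤ ξ → ξ ≤ x → x ≤ 1 → |l₁ x ξ| ≤ L₁)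
    (hl₂ : ∀ x ξ : ℝ, 0 ≤ ξ → ξ ≤ x → x ≤ 1 → |l₂ x ξ| ≤ L₂)
    (v : ℝ → ℝ)
    (hv : ∀ x ∈ Icc (0:ℝ) 1,
      v x = β x + (∫ ξ in (0:ℝ)..x, l₁ x ξ * u ξ) + ∫ ξ in (0:ℝ)..x, l₂ x ξ * β ξ) :
    (∫ x in (0:ℝ)..1, (u x) ^ 2) + (∫ x in (0:ℝ)..1, (v x) ^ 2) ≤
      (4 + 3 * L₁ ^ 2 + 3 * L₂ ^ 2) *
        ((∫ x in (0:ℝ)..1, (u x) ^ 2) + ∫ x in (0:ℝ)..1, (β x) ^ 2) := by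
  have hL₁ : 0 ≤ L₁ := le_trans (abs_nonneg _) (hl₁ 0 0 le_rfl le_rfl zero_le_one)
  have hL₂ : 0 ≤ L₂ := le_trans (abs_nonneg _) (hl₂ 0 0 le_rfl le_rfl zero_le_one)
  haveI : IsFiniteMeasure (volume.restrict (Ioc (0:ℝ) 1)) := by
    constructor; rw [Measure.restrict_apply_univ]; simp
  set A := ∫ x in Ioc (0:ℝ) 1, u x ^ 2 with hAdef
  set B := ∫ x in Ioc (0:ℝ) 1, β x ^ 2 with hBdef
  have hA0 : 0 ≤ A := setIntegral_nonneg measurableSet_Ioc fun x _ => sq_nonneg _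
  have hB0 : 0 ≤ B := setIntegral_nonneg measurableSet_Ioc fun x _ => sq_nonneg _
  have hu1 : IntegrableOn u (Ioc (0:ℝ) 1) volume := hu.integrable one_le_two
  have hβ1 : IntegrableOn β (Ioc (0:ℝ) 1) volume := hβ.integrable one_le_two
  set Iu := ∫ x in Ioc (0:ℝ) 1, |u x| with hIudef
  set Iβ := ∫ x in Ioc (0:ℝ) 1, |β x| with hIβdef
  have hIu0 : 0 ≤ Iu := setIntegral_nonneg measurableSet_Ioc fun x _ => abs_nonneg _
  have hIβ0 : 0 ≤ Iβ := setIntegral_nonneg measurableSet_Ioc fun x _ => abs_nonneg _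
  have CSu : Iu ^ 2 ≤ A := cs_aux u hu
  have CSβ : Iβ ^ 2 ≤ B := cs_aux β hβ
  -- a bound on kernel integrals, uniform in x
  have hker : ∀ (l : ℝ → ℝ → ℝ) (L : ℝ) (f : ℝ → ℝ),
      (∀ x ξ : ℝ, 0 ≤ ξ → ξ ≤ x → x ≤ 1 → |l x ξ| ≤ L) →
      IntegrableOn f (Ioc (0:ℝ) 1) volume →
      ∀ x ∈ Ioc (0:ℝ) 1,
        |∫ ξ in (0:ℝ)..x, l x ξ * f ξ| ≤ L * ∫ ξ in Ioc (0:ℝ) 1, |f ξ| := by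
    intro l L f hl hf x hx
    have hsub : Ioc (0:ℝ) x ⊆ Ioc (0:ℝ) 1 := Ioc_subset_Ioc_right hx.2
    have hfx : IntegrableOn f (Ioc (0:ℝ) x) volume := hf.mono_set hsub
    have step1 : |∫ ξ in (0:ℝ)..x, l x ξ * f ξ| ≤ ∫ ξ in Ioc (0:ℝ) x, |l x ξ * f ξ| := by
      rw [intervalIntegral.integral_of_le hx.1.le]
      have := norm_integral_le_integral_norm (fun ξ => l x ξ * f ξ)
        (μ := volume.restrict (Ioc (0:ℝ) x))
      simpa [Real.norm_eq_abs, abs_mul] using this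
    have step2 : ∫ ξ in Ioc (0:ℝ) x, |l x ξ * f ξ| ≤ ∫ ξ in Ioc (0:ℝ) x, L * |f ξ| := by
      refine integral_mono_of_nonneg (ae_of_all _ fun ξ => abs_nonneg _)
        ((hfx.abs).const_mul L) ?_
      refine (ae_restrict_iff' measurableSet_Ioc).2 (ae_of_all _ fun ξ hξ => ?_)
      show |l x ξ * f ξ| ≤ L * |f ξ|
      rw [abs_mul]
      exact mul_le_mul_of_nonneg_right (hl x ξ hξ.1.le hξ.2 hx.2) (abs_nonneg _)
    have step3 : ∫ ξ in Ioc (0:ℝ) x, L * |f ξ| ≤ L * ∫ ξ in Ioc (0:ℝ) 1, |f ξ| := by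
      rw [integral_const_mul]
      have : ∫ ξ in Ioc (0:ℝ) x, |f ξ| ≤ ∫ ξ in Ioc (0:ℝ) 1, |f ξ| :=
        setIntegral_mono_set hf.abs (ae_of_all _ fun ξ => abs_nonneg _)
          (HasSubset.Subset.eventuallyLE hsub)
      have hL : 0 ≤ L := le_trans (abs_nonneg _) (hl 0 0 le_rfl le_rfl zero_le_one)
      exact mul_le_mul_of_nonneg_left this hL
    linarith
  -- pointwise bound for v^2
  have hbound : ∀ x ∈ Ioc (0:ℝ) 1,
      v x ^ 2 ≤ 3 * β x ^ 2 + (3 * L₁ ^ 2 * A + 3 * L₂ ^ 2 * B) := by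
    intro x hx
    have hxIcc : x ∈ Icc (0:ℝ) 1 := ⟨hx.1.le, hx.2⟩
    have h1 := hker l₁ L₁ u hl₁ hu1 x hx
    have h2 := hker l₂ L₂ β hl₂ hβ1 x hx
    set I₁ := ∫ ξ in (0:ℝ)..x, l₁ x ξ * u ξ
    set I₂ := ∫ ξ in (0:ℝ)..x, l₂ x ξ * β ξ
    have e1 : I₁ ^ 2 ≤ L₁ ^ 2 * A := by
      have : |I₁| ^ 2 ≤ (L₁ * Iu) ^ 2 := pow_le_pow_left₀ (abs_nonneg _) h1 2
      rw [sq_abs, mul_pow] at this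
      nlinarith [sq_nonneg L₁]
    have e2 : I₂ ^ 2 ≤ L₂ ^ 2 * B := by
      have : |I₂| ^ 2 ≤ (L₂ * Iβ) ^ 2 := pow_le_pow_left₀ (abs_nonneg _) h2 2
      rw [sq_abs, mul_pow] at this
      nlinarith [sq_nonneg L₂]
    rw [hv x hxIcc]
    nlinarith [sq_nonneg (β x - I₁), sq_nonneg (β x - I₂), sq_nonneg (I₁ - I₂)]
  -- integrate the pointwise bound
  have hInt : Integrable (fun x => 3 * β x ^ 2 + (3 * L₁ ^ 2 * A + 3 * L₂ ^ 2 * B))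
      (volume.restrict (Ioc (0:ℝ) 1)) :=
    ((hβ.integrable_sq).const_mul 3).add (integrable_const _)
  have h5 : ∫ x in Ioc (0:ℝ) 1, v x ^ 2 ≤
      ∫ x in Ioc (0:ℝ) 1, (3 * β x ^ 2 + (3 * L₁ ^ 2 * A + 3 * L₂ ^ 2 * B)) := by
    refine integral_mono_of_nonneg (ae_of_all _ fun x => sq_nonneg _) hInt ?_
    exact (ae_restrict_iff' measurableSet_Ioc).2 (ae_of_all _ fun x hx => hbound x hx)
  have h6 : ∫ x in Ioc (0:ℝ) 1, (3 * β x ^ 2 + (3 * L₁ ^ 2 * A + 3 * L₂ ^ 2 * B))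
      = 3 * B + (3 * L₁ ^ 2 * A + 3 * L₂ ^ 2 * B) := by
    rw [integral_add ((hβ.integrable_sq).const_mul 3) (integrable_const _),
      integral_const_mul, setIntegral_const]
    simp [hBdef]
  rw [intervalIntegral.integral_of_le (zero_le_one' ℝ),
    intervalIntegral.integral_of_le (zero_le_one' ℝ),
    intervalIntegral.integral_of_le (zero_le_one' ℝ)]
  rw [h6] at h5
  nlinarith [sq_nonneg L₁, sq_nonneg L₂, mul_nonneg (sq_nonneg L₁) hB0,
    mul_nonneg (sq_nonneg L₂) hA0]
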